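/- Every application of Swap 3 leaves the target vector unchanged and strictly decreases the number of same-target inversions: if circuit c' is obtained from circuit c by a single Swap 3, then τ(c') = τ(c), and the number of pairs of positions i < j such that both slots hold gates with equal targets and the gate at position i has strictly fewer control qubits than the gate at position j is exactly one less in c' than in c. -/

import Mathlib

/-- An MCT gate on `n` qubits: a target qubit and a set of control qubits
not containing the target. -/
structure MCTGate (n : ℕ) where
  target : Fin n
  controls : Finset (Fin n)
  target_not_mem : target ∉ controls

/-- A circuit with possibly empty gates: a list of optional MCT gates. -/
abbrev Circuit (n : ℕ) := List (Option (MCTGate n))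

/-- The target vector of a circuit: each empty slot is replaced by `0` and
each slot holding a gate with target `t` is replaced by `t + 1`. -/
def tau {n : ℕ} (c : Circuit n) : List ℕ :=
  c.map (fun og => og.elim 0 (fun g => (g.target : ℕ) + 1))

open scoped Classical in
/-- The number of pairs of positions `i < j` of `c` whose slots `a` (at `i`)
and `b` (at `j`) satisfy the predicate `P a b`. -/
noncomputable def pairCount {n : ℕ} (P : Option (MCTGate n) → Option (MCTGate n) → Prop)
    (c : Circuit n) : ℕ :=
  ((Finset.range c.length ×ˢ Finset.range c.length).filter
    (fun p => p.1 < p.2 ∧ ∃ a b, (c)[p.1]? = some a ∧ (c)[p.2]? = some b ∧ P a b)).card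

/-- A single application of Swap 3: exchange adjacent gates `g1, g2`
(in this order) with the same target, where `g1` has strictly fewer
control qubits than `g2`. -/
inductive Swap3Step {n : ℕ} : Circuit n → Circuit n → Prop
  | intro (pre post : Circuit n) (g1 g2 : MCTGate n)
      (ht : g1.target = g2.target) (hc : g1.controls.card < g2.controls.card) :
      Swap3Step (pre ++ some g1 :: some g2 :: post) (pre ++ some g2 :: some g1 :: post)


open scoped Classical in
noncomputable def cnt {n : ℕ} (P : Option (MCTGate n) → Option (MCTGate n) → Prop)
    (a : Option (MCTGate n)) (l : Circuit n) : ℕ :=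
  ∑ j ∈ Finset.range l.length, if (∃ b, l[j]? = some b ∧ P a b) then 1 else 0

open scoped Classical in
lemma pairCount_eq_sum {n : ℕ} (P : Option (MCTGate n) → Option (MCTGate n) → Prop)
    (c : Circuit n) :
    pairCount P c = ∑ i ∈ Finset.range c.length, ∑ j ∈ Finset.range c.length,
      if (i < j ∧ ∃ a b, (c)[i]? = some a ∧ (c)[j]? = some b ∧ P a b) then 1 else 0 := by
  rw [pairCount, Finset.card_filter, Finset.sum_product]

open scoped Classical in
lemma cnt_cons {n : ℕ} (P : Option (MCTGate n) → Option (MCTGate n) → Prop)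
    (a b : Option (MCTGate n)) (l : Circuit n) :
    cnt P a (b :: l) = (if P a b then 1 else 0) + cnt P a l := by
  rw [cnt, List.length_cons, Finset.sum_range_succ']
  simp [cnt, add_comm]

open scoped Classical in
lemma pairCount_cons {n : ℕ} (P : Option (MCTGate n) → Option (MCTGate n) → Prop)
    (a : Option (MCTGate n)) (l : Circuit n) :
    pairCount P (a :: l) = cnt P a l + pairCount P l := by
  rw [pairCount_eq_sum, pairCount_eq_sum, List.length_cons, Finset.sum_range_succ']
  have h0 : ∑ j ∈ Finset.range (l.length + 1),
      (if (0 < j ∧ ∃ x b, (a :: l)[0]? = some x ∧ (a :: l)[j]? = some b ∧ P x b)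
        then 1 else 0) = cnt P a l := by
    rw [Finset.sum_range_succ']
    simp [cnt]
  rw [h0]
  have h1 : ∀ i, ∑ j ∈ Finset.range (l.length + 1),
      (if (i + 1 < j ∧ ∃ x b, (a :: l)[i+1]? = some x ∧ (a :: l)[j]? = some b ∧ P x b)
        then 1 else 0)
      = ∑ j ∈ Finset.range l.length,
      (if (i < j ∧ ∃ x b, (l)[i]? = some x ∧ (l)[j]? = some b ∧ P x b) then 1 else 0) := by
    intro i
    rw [Finset.sum_range_succ']
    simp
  rw [Finset.sum_congr rfl (fun i _ => h1 i)]
  ring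

open scoped Classical in
lemma cnt_swap {n : ℕ} (P : Option (MCTGate n) → Option (MCTGate n) → Prop)
    (a x y : Option (MCTGate n)) (pre post : Circuit n) :
    cnt P a (pre ++ x :: y :: post) = cnt P a (pre ++ y :: x :: post) := by
  induction pre with
  | nil => simp only [List.nil_append, cnt_cons]; ring
  | cons b pre ih => simp only [List.cons_append, cnt_cons, ih]

open scoped Classical in
lemma pairCount_swap {n : ℕ} (P : Option (MCTGate n) → Option (MCTGate n) → Prop)
    (x y : Option (MCTGate n)) (hxy : P x y) (hyx : ¬ P y x) (pre post : Circuit n) :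
    pairCount P (pre ++ y :: x :: post) + 1 = pairCount P (pre ++ x :: y :: post) := by
  induction pre with
  | nil =>
    simp only [List.nil_append, pairCount_cons, cnt_cons, if_pos hxy, if_neg hyx]
    ring
  | cons b pre ih =>
    simp only [List.cons_append, pairCount_cons]
    rw [cnt_swap P b x y pre post]
    omega

theorem swap3_preserves_tau_and_decreases_inversions {n : ℕ} {c c' : Circuit n}
    (h : Swap3Step c c') :
    tau c' = tau c ∧
      pairCount (fun a b => ∃ g1 g2, a = some g1 ∧ b = some g2 ∧
          g1.target = g2.target ∧ g1.controls.card < g2.controls.card) c' + 1 =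
        pairCount (fun a b => ∃ g1 g2, a = some g1 ∧ b = some g2 ∧
          g1.target = g2.target ∧ g1.controls.card < g2.controls.card) c := by
  cases h with
  | intro pre post g1 g2 ht hc =>
    constructor
    · simp [tau, ht]
    · apply pairCount_swap
      · exact ⟨g1, g2, rfl, rfl, ht, hc⟩
      · rintro ⟨a, b, ha, hb, ht', hc'⟩
        rw [Option.some_inj] at ha hb
        subst ha hb
        omega
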